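/- The function x ↦ x K₁(x)/K₀(x) is nondecreasing on (0,∞); that is, for all 0 < x ≤ y one has x K₁(x)/K₀(x) ≤ y K₁(y)/K₀(y). -/

import Mathlib

open MeasureTheory Filter Set Topology

/-- Macdonald function `K₀`, via its integral representation. -/
noncomputable def K0 (x : ℝ) : ℝ := ∫ t in Set.Ioi (0 : ℝ), Real.exp (-x * Real.cosh t)

/-- Macdonald function `K₁`, via its integral representation. -/
noncomputable def K1 (x : ℝ) : ℝ :=
  ∫ t in Set.Ioi (0 : ℝ), Real.exp (-x * Real.cosh t) * Real.cosh t

/- ### Auxiliary lemmas -/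

/-- Pointwise exponential-decay bound on `cosh t ^ n * exp (-c cosh t)` for `t ≥ 0`. -/
lemma cosh_pow_mul_exp_le (c : ℝ) (hc : 0 < c) (n : ℕ) {t : ℝ} (ht : 0 ≤ t) :
    Real.cosh t ^ n * Real.exp (-c * Real.cosh t) ≤
      (n.factorial * (4 / c) ^ n) * Real.exp (-(3 * c / 4) * t) := by
  have hs1 : (1 : ℝ) ≤ Real.cosh t := Real.one_le_cosh t
  have hst : t ≤ Real.cosh t := by
    rcases ht.eq_or_lt with h | h
    · simpa [← h] using hs1.le.trans_eq' (by norm_num)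
    · exact le_of_lt ((Real.self_lt_sinh_iff.2 h).trans (Real.sinh_lt_cosh t))
  have h1 : (c / 4 * Real.cosh t) ^ n / n.factorial ≤ Real.exp (c / 4 * Real.cosh t) :=
    Real.pow_div_factorial_le_exp _ (by positivity) n
  rw [div_le_iff₀ (by positivity)] at h1
  have key : Real.cosh t ^ n = (4 / c) ^ n * (c / 4 * Real.cosh t) ^ n := by
    rw [← mul_pow]
    congr 1
    field_simp
  have h2 : Real.cosh t ^ n ≤ (n.factorial * (4 / c) ^ n) * Real.exp (c / 4 * Real.cosh t) := by
    rw [key]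
    calc (4 / c) ^ n * (c / 4 * Real.cosh t) ^ n
        ≤ (4 / c) ^ n * (Real.exp (c / 4 * Real.cosh t) * n.factorial) :=
          mul_le_mul_of_nonneg_left h1 (by positivity)
      _ = (n.factorial * (4 / c) ^ n) * Real.exp (c / 4 * Real.cosh t) := by ring
  calc Real.cosh t ^ n * Real.exp (-c * Real.cosh t)
      ≤ ((n.factorial * (4 / c) ^ n) * Real.exp (c / 4 * Real.cosh t)) *
          Real.exp (-c * Real.cosh t) :=
        mul_le_mul_of_nonneg_right h2 (Real.exp_pos _).le
    _ = (n.factorial * (4 / c) ^ n) * Real.exp (-(3 * c / 4) * Real.cosh t) := by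
        rw [mul_assoc, ← Real.exp_add]
        ring_nf
    _ ≤ (n.factorial * (4 / c) ^ n) * Real.exp (-(3 * c / 4) * t) := by
        apply mul_le_mul_of_nonneg_left _ (by positivity)
        apply Real.exp_le_exp.2
        nlinarith

lemma integrable_cosh_pow (c : ℝ) (hc : 0 < c) (n : ℕ) :
    IntegrableOn (fun t => Real.cosh t ^ n * Real.exp (-c * Real.cosh t)) (Set.Ioi 0) := by
  apply Integrable.mono'
    (g := fun t => (n.factorial * (4 / c) ^ n) * Real.exp (-(3 * c / 4) * t))
  · exact (exp_neg_integrableOn_Ioi 0 (by positivity)).const_mul _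
  · exact (Continuous.aestronglyMeasurable (by continuity)).restrict
  · filter_upwards [ae_restrict_mem measurableSet_Ioi] with t ht
    rw [Real.norm_eq_abs, abs_of_nonneg (by positivity)]
    exact cosh_pow_mul_exp_le c hc n (le_of_lt ht)

lemma integrable_K0 (x : ℝ) (hx : 0 < x) :
    IntegrableOn (fun t => Real.exp (-x * Real.cosh t)) (Set.Ioi 0) := by
  simpa using integrable_cosh_pow x hx 0

lemma integrable_K1 (x : ℝ) (hx : 0 < x) :
    IntegrableOn (fun t => Real.exp (-x * Real.cosh t) * Real.cosh t) (Set.Ioi 0) := by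
  have := integrable_cosh_pow x hx 1
  simpa [mul_comm] using this

lemma integrable_K2 (x : ℝ) (hx : 0 < x) :
    IntegrableOn (fun t => Real.exp (-x * Real.cosh t) * Real.cosh t * Real.cosh t)
      (Set.Ioi 0) := by
  have := integrable_cosh_pow x hx 2
  apply this.congr_fun _ measurableSet_Ioi
  intro t _
  ring

lemma integrable_sinh_sq (x : ℝ) (hx : 0 < x) :
    IntegrableOn (fun t => Real.exp (-x * Real.cosh t) * Real.sinh t ^ 2) (Set.Ioi 0) := by
  apply (integrable_cosh_pow x hx 2).mono'
  · exact (Continuous.aestronglyMeasurable (by continuity)).restrict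
  · filter_upwards [ae_restrict_mem measurableSet_Ioi] with t _
    rw [Real.norm_eq_abs, abs_of_nonneg (by positivity)]
    have h1 : Real.sinh t ^ 2 ≤ Real.cosh t ^ 2 := by
      have := Real.sinh_lt_cosh t
      have h2 : -Real.cosh t ≤ Real.sinh t := by
        linarith [Real.sinh_add_cosh t, Real.exp_pos t]
      nlinarith
    nlinarith [Real.exp_pos (-x * Real.cosh t)]

lemma K0_pos (x : ℝ) (hx : 0 < x) : 0 < K0 x := by
  rw [K0, setIntegral_pos_iff_support_of_nonneg_ae]
  · have : Function.support (fun t => Real.exp (-x * Real.cosh t)) = Set.univ := by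
      ext t; simp [Function.support, (Real.exp_pos _).ne']
    rw [this, Set.univ_inter]
    simp [Real.volume_Ioi]
  · filter_upwards with t using (Real.exp_pos _).le
  · exact integrable_K0 x hx

lemma K0_le_K1 (x : ℝ) (hx : 0 < x) : K0 x ≤ K1 x := by
  rw [K0, K1]
  apply setIntegral_mono_on (integrable_K0 x hx) (integrable_K1 x hx) measurableSet_Ioi
  intro t _
  nlinarith [Real.one_le_cosh t, Real.exp_pos (-x * Real.cosh t)]

lemma K1_pos (x : ℝ) (hx : 0 < x) : 0 < K1 x := lt_of_lt_of_le (K0_pos x hx) (K0_le_K1 x hx)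

/-- Differentiation under the integral sign for `K0`. -/
lemma hasDerivAt_K0 (x : ℝ) (hx : 0 < x) : HasDerivAt K0 (-K1 x) x := by
  have hb : 0 < x / 2 := by linarith
  have key := hasDerivAt_integral_of_dominated_loc_of_deriv_le (Metric.ball_mem_nhds x hb)
    (F := fun y t => Real.exp (-y * Real.cosh t))
    (F' := fun y t => -(Real.exp (-y * Real.cosh t) * Real.cosh t))
    (bound := fun t => Real.cosh t * Real.exp (-(x / 2) * Real.cosh t))
    (μ := volume.restrict (Set.Ioi 0)) (x₀ := x)
    ?_ (integrable_K0 x hx) ?_ ?_ ((integrable_cosh_pow (x / 2) hb 1).congr_fun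
      (fun t _ => by ring) measurableSet_Ioi) ?_
  · have h2 : (∫ t in Set.Ioi (0:ℝ), -(Real.exp (-x * Real.cosh t) * Real.cosh t)) = -K1 x := by
      rw [integral_neg]; rfl
    rw [← h2]
    exact key.2
  · filter_upwards with y
    exact (Continuous.aestronglyMeasurable (by continuity)).restrict
  · exact (Continuous.aestronglyMeasurable (by continuity)).restrict
  · filter_upwards [ae_restrict_mem measurableSet_Ioi] with t ht y hy
    rw [Real.norm_eq_abs, abs_neg, abs_of_nonneg (by positivity)]
    rw [Metric.mem_ball, Real.dist_eq, abs_sub_lt_iff] at hy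
    have hy2 : x / 2 ≤ y := by linarith
    have : Real.exp (-y * Real.cosh t) ≤ Real.exp (-(x / 2) * Real.cosh t) := by
      apply Real.exp_le_exp.2
      have := Real.cosh_pos t
      nlinarith
    nlinarith [Real.cosh_pos t, Real.exp_pos (-y * Real.cosh t)]
  · filter_upwards [ae_restrict_mem measurableSet_Ioi] with t _ y _
    have h1 : HasDerivAt (fun y : ℝ => -y * Real.cosh t) (-Real.cosh t) y := by
      have := ((hasDerivAt_id y).neg).mul_const (Real.cosh t)
      simpa using this
    have := h1.exp
    simpa [mul_comm, neg_mul] using this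

/-- Integration by parts: `∫ exp(-x cosh t) cosh t = x ∫ exp(-x cosh t) sinh² t`. -/
lemma K1_eq_parts (x : ℝ) (hx : 0 < x) :
    K1 x = x * ∫ t in Set.Ioi (0 : ℝ), Real.exp (-x * Real.cosh t) * Real.sinh t ^ 2 := by
  set f : ℝ → ℝ := fun t => Real.exp (-x * Real.cosh t) * Real.sinh t
  set f' : ℝ → ℝ := fun t =>
    Real.exp (-x * Real.cosh t) * Real.cosh t - x * (Real.exp (-x * Real.cosh t) * Real.sinh t ^ 2)
  have hderiv : ∀ t ∈ Set.Ici (0 : ℝ), HasDerivAt f (f' t) t := by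
    intro t _
    have h1 : HasDerivAt (fun t : ℝ => -x * Real.cosh t) (-x * Real.sinh t) t :=
      (Real.hasDerivAt_cosh t).const_mul (-x)
    have h2 : HasDerivAt (fun t => Real.exp (-x * Real.cosh t))
        (Real.exp (-x * Real.cosh t) * (-x * Real.sinh t)) t :=
      h1.exp
    have h3 := h2.mul (Real.hasDerivAt_sinh t)
    refine h3.congr_deriv ?_
    simp only [f']
    ring
  have hint : IntegrableOn f' (Set.Ioi 0) :=
    (integrable_K1 x hx).sub ((integrable_sinh_sq x hx).const_mul x)
  have htend : Tendsto f atTop (nhds 0) := by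
    have hb : (0:ℝ) < x := hx
    apply squeeze_zero_norm' (a := fun t => ((Nat.factorial 1 : ℝ) * (4 / x) ^ 1) *
      Real.exp (-(3 * x / 4) * t))
    · filter_upwards [eventually_ge_atTop (0 : ℝ)] with t ht
      have h1 : |Real.sinh t| ≤ Real.cosh t := by
        have := Real.sinh_lt_cosh t
        have h2 : -Real.cosh t ≤ Real.sinh t := by
          linarith [Real.sinh_add_cosh t, Real.exp_pos t]
        rw [abs_le]; constructor <;> nlinarith
      have h3 := cosh_pow_mul_exp_le x hx 1 ht
      rw [Real.norm_eq_abs, abs_mul, abs_of_pos (Real.exp_pos _)]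
      calc Real.exp (-x * Real.cosh t) * |Real.sinh t|
          ≤ Real.exp (-x * Real.cosh t) * Real.cosh t :=
            mul_le_mul_of_nonneg_left h1 (Real.exp_pos _).le
        _ ≤ _ := by nlinarith
    · have h1 : Tendsto (fun t : ℝ => -(3 * x / 4) * t) atTop atBot :=
        Tendsto.const_mul_atTop_of_neg (by linarith) tendsto_id
      have h2 : Tendsto (fun t : ℝ => Real.exp (-(3 * x / 4) * t)) atTop (nhds 0) :=
        Real.tendsto_exp_atBot.comp h1
      have h3 := h2.const_mul ((Nat.factorial 1 : ℝ) * (4 / x) ^ 1)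
      rw [mul_zero] at h3
      exact h3
  have hInt := integral_Ioi_of_hasDerivAt_of_tendsto' hderiv hint htend
  have hf0 : f 0 = 0 := by simp [f]
  rw [hf0, sub_zero] at hInt
  have hzero : (∫ t in Set.Ioi (0:ℝ), Real.exp (-x * Real.cosh t) * Real.cosh t)
      - ∫ t in Set.Ioi (0:ℝ), x * (Real.exp (-x * Real.cosh t) * Real.sinh t ^ 2) = 0 := by
    rw [← integral_sub (integrable_K1 x hx) ((integrable_sinh_sq x hx).const_mul x)]
    exact hInt
  have hmul : (∫ t in Set.Ioi (0:ℝ), x * (Real.exp (-x * Real.cosh t) * Real.sinh t ^ 2))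
      = x * ∫ t in Set.Ioi (0:ℝ), Real.exp (-x * Real.cosh t) * Real.sinh t ^ 2 :=
    integral_const_mul x _
  rw [hmul] at hzero
  rw [K1]
  linarith

/-- Differentiation under the integral sign for `K1`, combined with integration by parts. -/
lemma hasDerivAt_K1 (x : ℝ) (hx : 0 < x) : HasDerivAt K1 (-(K0 x + K1 x / x)) x := by
  have hb : 0 < x / 2 := by linarith
  have key := hasDerivAt_integral_of_dominated_loc_of_deriv_le (Metric.ball_mem_nhds x hb)
    (F := fun y t => Real.exp (-y * Real.cosh t) * Real.cosh t)
    (F' := fun y t => -(Real.exp (-y * Real.cosh t) * Real.cosh t * Real.cosh t))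
    (bound := fun t => Real.cosh t ^ 2 * Real.exp (-(x / 2) * Real.cosh t))
    (μ := volume.restrict (Set.Ioi 0)) (x₀ := x)
    ?_ (integrable_K1 x hx) ?_ ?_ (integrable_cosh_pow (x / 2) hb 2) ?_
  · have hM : (∫ t in Set.Ioi (0:ℝ),
        -(Real.exp (-x * Real.cosh t) * Real.cosh t * Real.cosh t)) = -(K0 x + K1 x / x) := by
      rw [integral_neg, neg_inj]
      have hsq : ∀ t : ℝ, Real.exp (-x * Real.cosh t) * Real.cosh t * Real.cosh t =
          Real.exp (-x * Real.cosh t) + Real.exp (-x * Real.cosh t) * Real.sinh t ^ 2 := by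
        intro t
        linear_combination Real.exp (-x * Real.cosh t) * (Real.cosh_sq_sub_sinh_sq t)
      rw [setIntegral_congr_fun measurableSet_Ioi (fun t _ => hsq t),
        integral_add (integrable_K0 x hx) (integrable_sinh_sq x hx)]
      have hparts := K1_eq_parts x hx
      have hxne : x ≠ 0 := ne_of_gt hx
      rw [← K0]
      have hS : (∫ t in Set.Ioi (0:ℝ), Real.exp (-x * Real.cosh t) * Real.sinh t ^ 2)
          = K1 x / x := by
        rw [eq_div_iff hxne, hparts]
        ring
      rw [hS]
    rw [← hM]
    exact key.2
  · filter_upwards with y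
    exact (Continuous.aestronglyMeasurable (by continuity)).restrict
  · exact (Continuous.aestronglyMeasurable (by continuity)).restrict
  · filter_upwards [ae_restrict_mem measurableSet_Ioi] with t ht y hy
    rw [Real.norm_eq_abs, abs_neg, abs_of_nonneg (by positivity)]
    rw [Metric.mem_ball, Real.dist_eq, abs_sub_lt_iff] at hy
    have hy2 : x / 2 ≤ y := by linarith
    have : Real.exp (-y * Real.cosh t) ≤ Real.exp (-(x / 2) * Real.cosh t) := by
      apply Real.exp_le_exp.2
      have := Real.cosh_pos t
      nlinarith
    nlinarith [Real.cosh_pos t, Real.exp_pos (-y * Real.cosh t)]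
  · filter_upwards [ae_restrict_mem measurableSet_Ioi] with t _ y _
    have h1 : HasDerivAt (fun y : ℝ => -y * Real.cosh t) (-Real.cosh t) y := by
      have := ((hasDerivAt_id y).neg).mul_const (Real.cosh t)
      simpa using this
    have h2 := h1.exp
    have h3 := h2.mul_const (Real.cosh t)
    refine h3.congr_deriv ?_
    ring

lemma hasDerivAt_ratio (x : ℝ) (hx : 0 < x) :
    HasDerivAt (fun y => y * K1 y / K0 y)
      (x * (K1 x ^ 2 - K0 x ^ 2) / K0 x ^ 2) x := by
  have hK0 := K0_pos x hx
  have hnum : HasDerivAt (fun y => y * K1 y) (-(x * K0 x)) x := by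
    have := (hasDerivAt_id x).mul (hasDerivAt_K1 x hx)
    refine this.congr_deriv ?_
    simp only [id_eq]
    field_simp [hx.ne']
    ring
  have := hnum.div (hasDerivAt_K0 x hx) (ne_of_gt hK0)
  refine this.congr_deriv ?_
  ring

/-- First assertion of Lemma 5.8: the ratio `x ↦ x K₁(x)/K₀(x)` is nondecreasing
on `(0,∞)`. -/
theorem xK1_div_K0_monotone :
    ∀ x y : ℝ, 0 < x → x ≤ y → x * K1 x / K0 x ≤ y * K1 y / K0 y := by
  have hmono : MonotoneOn (fun y => y * K1 y / K0 y) (Set.Ioi 0) := by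
    have hint : interior (Set.Ioi (0:ℝ)) = Set.Ioi 0 := isOpen_Ioi.interior_eq
    apply monotoneOn_of_deriv_nonneg (convex_Ioi 0)
    · intro z hz
      exact (hasDerivAt_ratio z hz).continuousAt.continuousWithinAt
    · rw [hint]
      intro z hz
      exact (hasDerivAt_ratio z hz).differentiableAt.differentiableWithinAt
    · rw [hint]
      intro z hz
      rw [(hasDerivAt_ratio z hz).deriv]
      have h1 := K0_pos z hz
      have h2 := K0_le_K1 z hz
      have h3 : K0 z ^ 2 ≤ K1 z ^ 2 := by nlinarith
      apply div_nonneg (mul_nonneg (le_of_lt hz) (by linarith)) (by positivity)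
  intro x y hx hxy
  exact hmono (Set.mem_Ioi.2 hx) (Set.mem_Ioi.2 (lt_of_lt_of_le hx hxy)) hxy
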